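/- Let s ≥ 0, r ≥ 1, c, q ∈ ℝ, and define g_*(τ) := 1 − τ^{s+1}·(q − cτ)^r for τ in an open interval I on which τ > 0 and q − cτ > 0, and define df_*(τ) := ((s+1)/r)·(q − cτ)/τ. Suppose τ₁ < τ₂ in I satisfy g_*(τ₁) = g_*(τ₂) = 0, g_*(τ) ≠ 0 for all τ ∈ (τ₁, τ₂), and df_*(τᵢ) ≠ c for i = 1, 2. Then (df_*(τ₁) − c)·(df_*(τ₂) − c) < 0; that is, the sign of df_* − c alternates among consecutive nondegenerate equilibria of the traveling-wave ODE. -/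

import Mathlib

lemma left_nonneg' {g : ℝ → ℝ} {τ₁ τ₂ d : ℝ} (h : τ₁ < τ₂)
    (hd : HasDerivAt g d τ₁) (h0 : g τ₁ = 0)
    (hpos : ∀ τ ∈ Set.Ioo τ₁ τ₂, 0 ≤ g τ) : 0 ≤ d := by
  rw [hasDerivAt_iff_tendsto_slope] at hd
  have hd' : Filter.Tendsto (slope g τ₁) (nhdsWithin τ₁ (Set.Ioi τ₁)) (nhds d) :=
    hd.mono_left (nhdsWithin_mono _ (fun x hx => hx.ne'))
  refine ge_of_tendsto hd' ?_
  filter_upwards [Ioo_mem_nhdsGT h] with x hx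
  have hx1 : 0 < x - τ₁ := sub_pos.2 hx.1
  have hgx := hpos x hx
  rw [slope_def_field, h0, sub_zero]
  exact div_nonneg hgx hx1.le

lemma right_nonpos' {g : ℝ → ℝ} {τ₁ τ₂ d : ℝ} (h : τ₁ < τ₂)
    (hd : HasDerivAt g d τ₂) (h0 : g τ₂ = 0)
    (hpos : ∀ τ ∈ Set.Ioo τ₁ τ₂, 0 ≤ g τ) : d ≤ 0 := by
  rw [hasDerivAt_iff_tendsto_slope] at hd
  have hd' : Filter.Tendsto (slope g τ₂) (nhdsWithin τ₂ (Set.Iio τ₂)) (nhds d) :=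
    hd.mono_left (nhdsWithin_mono _ (fun x hx => hx.ne))
  refine le_of_tendsto hd' ?_
  filter_upwards [Ioo_mem_nhdsLT h] with x hx
  have hx1 : x - τ₂ < 0 := sub_neg.2 hx.2
  have hgx := hpos x hx
  rw [slope_def_field, h0, sub_zero]
  exact div_nonpos_of_nonneg_of_nonpos hgx hx1.le

lemma sign_const' {g : ℝ → ℝ} {τ₁ τ₂ : ℝ} (h : τ₁ < τ₂)
    (hcont : ContinuousOn g (Set.Icc τ₁ τ₂))
    (hnz : ∀ τ ∈ Set.Ioo τ₁ τ₂, g τ ≠ 0) :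
    (∀ τ ∈ Set.Ioo τ₁ τ₂, 0 < g τ) ∨ (∀ τ ∈ Set.Ioo τ₁ τ₂, g τ < 0) := by
  by_cases hall : ∀ τ ∈ Set.Ioo τ₁ τ₂, 0 < g τ
  · exact Or.inl hall
  push_neg at hall
  obtain ⟨y, hy, hyle⟩ := hall
  have hylt : g y < 0 := lt_of_le_of_ne hyle (hnz y hy)
  right
  intro x hx
  by_contra hxc
  push_neg at hxc
  have hxpos : 0 < g x := lt_of_le_of_ne hxc (Ne.symm (hnz x hx))
  have hsub : ∀ u v : ℝ, u ∈ Set.Ioo τ₁ τ₂ → v ∈ Set.Ioo τ₁ τ₂ →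
      Set.Icc u v ⊆ Set.Ioo τ₁ τ₂ := by
    intro u v hu hv z hz
    exact ⟨lt_of_lt_of_le hu.1 hz.1, lt_of_le_of_lt hz.2 hv.2⟩
  rcases lt_trichotomy x y with hxy | rfl | hyx
  · -- x < y, g x > 0 > g y
    obtain ⟨z, hz, hz0⟩ := intermediate_value_Icc' hxy.le
      (hcont.mono ((hsub x y hx hy).trans Set.Ioo_subset_Icc_self))
      (Set.mem_Icc.2 ⟨hylt.le, hxpos.le⟩)
    exact hnz z (hsub x y hx hy hz) hz0
  · exact absurd hxpos (not_lt.2 hylt.le)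
  · obtain ⟨z, hz, hz0⟩ := intermediate_value_Icc hyx.le
      (hcont.mono ((hsub y x hy hx).trans Set.Ioo_subset_Icc_self))
      (Set.mem_Icc.2 ⟨hylt.le, hxpos.le⟩)
    exact hnz z (hsub y x hy hx hz) hz0

lemma key_alt {g : ℝ → ℝ} {τ₁ τ₂ d₁ d₂ : ℝ} (h : τ₁ < τ₂)
    (hd1 : HasDerivAt g d₁ τ₁) (hd2 : HasDerivAt g d₂ τ₂)
    (h01 : g τ₁ = 0) (h02 : g τ₂ = 0)
    (hcont : ContinuousOn g (Set.Icc τ₁ τ₂))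
    (hnz : ∀ τ ∈ Set.Ioo τ₁ τ₂, g τ ≠ 0)
    (hne1 : d₁ ≠ 0) (hne2 : d₂ ≠ 0) : d₁ * d₂ < 0 := by
  rcases sign_const' h hcont hnz with hP | hN
  · have h1 : 0 ≤ d₁ := left_nonneg' h hd1 h01 (fun τ hτ => (hP τ hτ).le)
    have h2 : d₂ ≤ 0 := right_nonpos' h hd2 h02 (fun τ hτ => (hP τ hτ).le)
    exact mul_neg_of_pos_of_neg (lt_of_le_of_ne h1 (Ne.symm hne1))
      (lt_of_le_of_ne h2 hne2)
  · have h1 : 0 ≤ -d₁ := left_nonneg' h hd1.neg (by simp [h01])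
      (fun τ hτ => neg_nonneg.2 (hN τ hτ).le)
    have h2 : -d₂ ≤ 0 := right_nonpos' h hd2.neg (by simp [h02])
      (fun τ hτ => neg_nonneg.2 (hN τ hτ).le)
    have := mul_neg_of_pos_of_neg (lt_of_le_of_ne h1 (by simpa using hne1))
      (lt_of_le_of_ne h2 (by simpa using hne2))
    nlinarith

/-- Alternation of equilibria of the St. Venant traveling-wave ODE: at two
consecutive nondegenerate zeros of `g_*(τ) = 1 − τ^{s+1}(q − cτ)^r` in an open
interval where `τ > 0` and `q − cτ > 0`, the quantity `df_*(τ) − c` changes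
sign. -/
theorem stmt12 (s r c q : ℝ) (hs : 0 ≤ s) (hr : 1 ≤ r)
    (a b : ℝ) (hab : a < b)
    (hpos : ∀ τ ∈ Set.Ioo a b, 0 < τ ∧ 0 < q - c * τ)
    (gstar dfstar : ℝ → ℝ)
    (hg : ∀ τ, gstar τ = 1 - τ ^ (s + 1) * (q - c * τ) ^ r)
    (hdf : ∀ τ, dfstar τ = ((s + 1) / r) * ((q - c * τ) / τ))
    (τ₁ τ₂ : ℝ) (h12 : τ₁ < τ₂)
    (h1 : τ₁ ∈ Set.Ioo a b) (h2 : τ₂ ∈ Set.Ioo a b)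
    (hz1 : gstar τ₁ = 0) (hz2 : gstar τ₂ = 0)
    (hnz : ∀ τ ∈ Set.Ioo τ₁ τ₂, gstar τ ≠ 0)
    (hne1 : dfstar τ₁ ≠ c) (hne2 : dfstar τ₂ ≠ c) :
    (dfstar τ₁ - c) * (dfstar τ₂ - c) < 0 := by
  have hgf : gstar = fun τ => 1 - τ ^ (s + 1) * (q - c * τ) ^ r := funext hg
  have hr0 : (0:ℝ) < r := lt_of_lt_of_le one_pos hr
  set D : ℝ → ℝ := fun τ =>
    -((s + 1) * τ ^ s * (q - c * τ) ^ r + τ ^ (s + 1) * (r * (q - c * τ) ^ (r - 1) * (-c)))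
    with hD
  have hderiv : ∀ τ ∈ Set.Ioo a b, HasDerivAt gstar (D τ) τ := by
    intro τ hτ
    obtain ⟨hτ0, hu0⟩ := hpos τ hτ
    have e1 : HasDerivAt (fun τ : ℝ => τ ^ (s + 1)) ((s + 1) * τ ^ s) τ := by
      have := Real.hasDerivAt_rpow_const (x := τ) (p := s + 1) (Or.inl hτ0.ne')
      simpa using this
    have hlin : HasDerivAt (fun τ : ℝ => q - c * τ) (-c) τ := by
      simpa using ((hasDerivAt_id τ).const_mul c).const_sub q
    have e2 : HasDerivAt (fun τ : ℝ => (q - c * τ) ^ r)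
        (r * (q - c * τ) ^ (r - 1) * (-c)) τ := by
      have := (Real.hasDerivAt_rpow_const (x := q - c * τ) (p := r)
        (Or.inl hu0.ne')).comp τ hlin
      exact this
    have h3 := (e1.mul e2).const_sub 1
    rw [hgf]
    simpa [hD] using h3
  -- key identity at a zero
  have hkey : ∀ τ ∈ Set.Ioo a b, gstar τ = 0 →
      dfstar τ - c = -((q - c * τ) / r) * D τ := by
    intro τ hτ h0
    obtain ⟨hτ0, hu0⟩ := hpos τ hτ
    have hAB : τ ^ (s + 1) * (q - c * τ) ^ r = 1 := by
      have := hg τ; rw [h0] at this; linarith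
    have e1 : τ ^ (s + 1) = τ ^ s * τ := by
      rw [Real.rpow_add_one hτ0.ne' s]
    have e2 : (q - c * τ) ^ r = (q - c * τ) ^ (r - 1) * (q - c * τ) := by
      have := Real.rpow_add_one hu0.ne' (r - 1)
      rw [show r - 1 + 1 = r from by ring] at this
      exact this
    have hDτ : D τ = -((s + 1) * τ ^ s * (q - c * τ) ^ r +
        τ ^ (s + 1) * (r * (q - c * τ) ^ (r - 1) * (-c))) := rfl
    rw [hdf, hDτ]
    rw [e1, e2] at hAB ⊢
    field_simp
    linear_combination (-((s + 1) * (q - c * τ) - r * c * τ)) * hAB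
  have hsub : Set.Icc τ₁ τ₂ ⊆ Set.Ioo a b := fun z hz =>
    ⟨lt_of_lt_of_le h1.1 hz.1, lt_of_le_of_lt hz.2 h2.2⟩
  have hcont : ContinuousOn gstar (Set.Icc τ₁ τ₂) := fun x hx =>
    ((hderiv x (hsub hx)).differentiableAt.continuousAt).continuousWithinAt
  obtain ⟨hτ10, hu10⟩ := hpos τ₁ h1
  obtain ⟨hτ20, hu20⟩ := hpos τ₂ h2
  have hk1 := hkey τ₁ h1 hz1
  have hk2 := hkey τ₂ h2 hz2
  have hD1 : D τ₁ ≠ 0 := by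
    intro h; apply hne1; have := hk1; rw [h] at this; simp at this; linarith
  have hD2 : D τ₂ ≠ 0 := by
    intro h; apply hne2; have := hk2; rw [h] at this; simp at this; linarith
  have hDD : D τ₁ * D τ₂ < 0 :=
    key_alt h12 (hderiv τ₁ h1) (hderiv τ₂ h2) hz1 hz2 hcont hnz hD1 hD2
  rw [hk1, hk2]
  have heq : -((q - c * τ₁) / r) * D τ₁ * (-((q - c * τ₂) / r) * D τ₂)
      = ((q - c * τ₁) / r * ((q - c * τ₂) / r)) * (D τ₁ * D τ₂) := by ring
  rw [heq]
  exact mul_neg_of_pos_of_neg (mul_pos (div_pos hu10 hr0) (div_pos hu20 hr0)) hDD
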